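/- Let A be a nonempty finite index set, let (mᵢ)_{i∈A} be nonzero Gaussian integers, and let L be a least common multiple of the mᵢ in ℤ[i]. Let s be a Gaussian integer with 4·N(s) < N(L), and for each i ∈ A let sᵢ be the unique remainder of s modulo mᵢ lying in 𝓕(mᵢ). Then any Gaussian integer x satisfying x ≡ sᵢ (mod mᵢ) for all i ∈ A satisfies x ≡ s (mod L), and the unique remainder of x modulo L lying in 𝓕(L) equals s. -/

import Mathlib

/-- The fundamental domain `𝓕(z)` of a Gaussian integer `z`:
the semi-open square `{ z(α + βi) : -1/2 < α ≤ 1/2, -1/2 < β ≤ 1/2 }` in `ℂ`. -/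
def Fd (z : GaussianInt) : Set ℂ :=
  { w | ∃ α β : ℝ, w = (GaussianInt.toComplex z) * (α + β * Complex.I) ∧
      -(1/2 : ℝ) < α ∧ α ≤ 1/2 ∧ -(1/2 : ℝ) < β ∧ β ≤ 1/2 }

/-- Correctness of secret reconstruction: if `L` is a least common multiple of the
nonzero moduli `m i` (`i ∈ A`, `A` nonempty), `4 * N(s) < N(L)`, and each `sh i` is the
remainder of the secret `s` modulo `m i` lying in `𝓕(m i)`, then every solution `x` of
the congruence system `x ≡ sh i (mod m i)` satisfies `x ≡ s (mod L)`, and the remainder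
of `x` modulo `L` lying in `𝓕(L)` equals `s`. -/
theorem reconstruction_correct {ι : Type*} (A : Finset ι) (hA : A.Nonempty)
    (m : ι → GaussianInt) (hm : ∀ i ∈ A, m i ≠ 0) (L : GaussianInt)
    (hL₁ : ∀ i ∈ A, m i ∣ L) (hL₂ : ∀ K : GaussianInt, (∀ i ∈ A, m i ∣ K) → L ∣ K)
    (s : GaussianInt) (hs : 4 * s.norm < L.norm)
    (sh : ι → GaussianInt)
    (hsh : ∀ i ∈ A, GaussianInt.toComplex (sh i) ∈ Fd (m i) ∧ m i ∣ s - sh i)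
    (x : GaussianInt) (hx : ∀ i ∈ A, m i ∣ x - sh i) :
    L ∣ x - s ∧
      ∀ r : GaussianInt, GaussianInt.toComplex r ∈ Fd L → L ∣ x - r → r = s := by
  have hnorms : (0:ℤ) ≤ s.norm := GaussianInt.norm_nonneg s
  have h1 : L ∣ x - s := by
    apply hL₂
    intro i hi
    have : m i ∣ (x - sh i) - (s - sh i) := dvd_sub (hx i hi) (hsh i hi).2
    simpa using this
  refine ⟨h1, ?_⟩
  intro r hr hxr
  have hsr : L ∣ s - r := by
    have : L ∣ (x - r) - (x - s) := dvd_sub hxr h1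
    simpa using this
  obtain ⟨q, hq⟩ := hsr
  obtain ⟨α, β, hre, hα1, hα2, hβ1, hβ2⟩ := hr
  have hL0 : L ≠ 0 := by
    intro h; rw [h] at hs; simp [Zsqrtd.norm] at hs; nlinarith
  have hLc : (GaussianInt.toComplex L) ≠ 0 := by
    simpa using (GaussianInt.toComplex_eq_zero.not.mpr hL0)
  -- complex equation
  have hqc : GaussianInt.toComplex s - GaussianInt.toComplex r
      = GaussianInt.toComplex L * GaussianInt.toComplex q := by
    rw [← map_mul, ← map_sub, hq]
  set c : ℂ := GaussianInt.toComplex s / GaussianInt.toComplex L with hc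
  have hcnorm : Complex.normSq c < 1/4 := by
    have h1 : Complex.normSq (GaussianInt.toComplex s) = (s.norm : ℝ) :=
      (GaussianInt.intCast_real_norm s).symm
    have h2 : Complex.normSq (GaussianInt.toComplex L) = (L.norm : ℝ) :=
      (GaussianInt.intCast_real_norm L).symm
    have hLpos : (0:ℝ) < (L.norm : ℝ) := by
      have : (0:ℤ) < L.norm := lt_of_le_of_lt (by nlinarith) hs
      exact_mod_cast this
    rw [hc, Complex.normSq_div, h1, h2, div_lt_iff₀ hLpos]
    have : (4 : ℝ) * (s.norm : ℝ) < (L.norm : ℝ) := by exact_mod_cast hs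
    linarith
  have hqeq : GaussianInt.toComplex q = c - (α + β * Complex.I) := by
    field_simp [hc]
    have h := hqc
    rw [hre] at h
    have hL' : GaussianInt.toComplex L * (GaussianInt.toComplex L)⁻¹ = 1 := mul_inv_cancel₀ hLc
    linear_combination (-(GaussianInt.toComplex L)⁻¹) * h - ((α:ℂ) + β * Complex.I + GaussianInt.toComplex q) * hL'
  have hcre : |c.re| < 1/2 ∧ |c.im| < 1/2 := by
    constructor <;> rw [abs_lt] <;> constructor <;>
      nlinarith [Complex.normSq_apply c, sq_nonneg c.re, sq_nonneg c.im]
  have hqre : (GaussianInt.toComplex q).re = c.re - α := by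
    rw [hqeq]; simp
  have hqim : (GaussianInt.toComplex q).im = c.im - β := by
    rw [hqeq]; simp
  have hzre : ((q.re : ℤ) : ℝ) = c.re - α := by
    rw [GaussianInt.intCast_re, hqre]
  have hzim : ((q.im : ℤ) : ℝ) = c.im - β := by
    rw [GaussianInt.intCast_im, hqim]
  have hq0 : q = 0 := by
    have h1 : q.re = 0 := by
      have : |((q.re : ℤ) : ℝ)| < 1 := by
        rw [hzre, abs_lt]; constructor <;> nlinarith [abs_lt.mp hcre.1]
      have h : |q.re| < 1 := by exact_mod_cast this
      exact Int.abs_lt_one_iff.mp h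
    have h2 : q.im = 0 := by
      have : |((q.im : ℤ) : ℝ)| < 1 := by
        rw [hzim, abs_lt]; constructor <;> nlinarith [abs_lt.mp hcre.2]
      have h : |q.im| < 1 := by exact_mod_cast this
      exact Int.abs_lt_one_iff.mp h
    ext <;> simp [h1, h2]
  have : s - r = 0 := by rw [hq, hq0, mul_zero]
  have := sub_eq_zero.mp this
  exact this.symm
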